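/- Let G be a connected multigraph and H a proper induced subgraph of G. Let k be the number of edges of G adjacent to H but not contained in H. Then the number of leaves of the forest of 2-edge-connected components of H satisfies #l(H^Br) ≤ #l(G^Br) + k. -/

import Mathlib

/-- A finite multigraph: loops and parallel edges allowed. -/
structure Multigraph where
  V : Type
  E : Type
  finV : Finite V
  finE : Finite E
  src : E → V
  tgt : E → V

namespace Multigraph

attribute [instance] Multigraph.finV Multigraph.finE

variable (G : Multigraph)

/-- Adjacency using only edges in `S`. -/
def Adj (S : Set G.E) (u v : G.V) : Prop :=
  ∃ e ∈ S, (G.src e = u ∧ G.tgt e = v) ∨ (G.src e = v ∧ G.tgt e = u)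

/-- Reachability using only edges in `S`. -/
def ReachOn (S : Set G.E) : G.V → G.V → Prop :=
  Relation.ReflTransGen (G.Adj S)

/-- Reachability in `G`. -/
def Reach : G.V → G.V → Prop := G.ReachOn Set.univ

def Connected : Prop := Nonempty G.V ∧ ∀ u v : G.V, G.Reach u v

/-- An edge is a bridge iff its removal disconnects its endpoints. -/
def IsBridge (e : G.E) : Prop := ¬ G.ReachOn {f | f ≠ e} (G.src e) (G.tgt e)

def TwoEdgeConnected : Prop := G.Connected ∧ ∀ e : G.E, ¬ G.IsBridge e

/-- The graph `G^Br` obtained by contracting all non-bridge edges: its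
vertices are the 2-edge-connected components of `G`, its edges the bridges. -/
def Br : Multigraph where
  V := Quot (G.ReachOn {e | ¬ G.IsBridge e})
  E := {e : G.E // G.IsBridge e}
  finV := Finite.of_surjective _ Quot.exists_rep
  finE := Subtype.finite
  src e := Quot.mk _ (G.src e.1)
  tgt e := Quot.mk _ (G.tgt e.1)

/-- Number of edges adjacent to a vertex (loops counted once; used only
for forests, which have no loops). -/
noncomputable def degAt (v : G.V) : ℕ := {e : G.E | G.src e = v ∨ G.tgt e = v}.ncard

/-- Leaf count of a forest, with the convention that an isolated vertex
(a single-vertex tree) counts as `2` leaves. -/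
noncomputable def numLeaves : ℕ :=
  2 * {v : G.V | G.degAt v = 0}.ncard + {v : G.V | G.degAt v = 1}.ncard

/-- The induced subgraph on a set of vertices. -/
def induce (W : Set G.V) : Multigraph where
  V := W
  E := {e : G.E // G.src e ∈ W ∧ G.tgt e ∈ W}
  finV := Subtype.finite
  finE := Subtype.finite
  src e := ⟨G.src e.1, e.2.1⟩
  tgt e := ⟨G.tgt e.1, e.2.2⟩

/-- Deletion of an edge. -/
def deleteEdge (e : G.E) : Multigraph where
  V := G.V
  E := {f : G.E // f ≠ e}
  finV := G.finV
  finE := Subtype.finite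
  src f := G.src f.1
  tgt f := G.tgt f.1

/-- Valence of a vertex, loops counted twice. -/
noncomputable def valence (v : G.V) : ℕ :=
  {e : G.E | G.src e = v}.ncard + {e : G.E | G.tgt e = v}.ncard

/-- Number of edges joining `w` to the set `S` (for `w ∉ S`). -/
noncomputable def edgesTo (w : G.V) (S : Set G.V) : ℕ :=
  {e : G.E | (G.src e = w ∧ G.tgt e ∈ S) ∨ (G.tgt e = w ∧ G.src e ∈ S)}.ncard

/-- The Dhar subgraph `Dh(v, d)`: the smallest set of vertices containing `v`
that is closed under adding a vertex `w` whenever `d w` is smaller than the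
number of edges joining `w` to the set. -/
def dhar (d : G.V → ℤ) (v : G.V) : Set G.V :=
  ⋂₀ {S : Set G.V | v ∈ S ∧ ∀ w ∉ S, (G.edgesTo w S : ℤ) ≤ d w}

end Multigraph

/-- A vertex-weighted finite multigraph. -/
structure WGraph extends Multigraph where
  weight : V → ℕ

namespace WGraph

variable (G : WGraph)

/-- The genus `1 - |V| + |E| + Σ_v g_v`. -/
noncomputable def genus : ℤ :=
  1 - (Nat.card G.V : ℤ) + Nat.card G.E + ∑ᶠ v : G.V, (G.weight v : ℤ)

def Semistable : Prop := ∀ v : G.V, G.weight v = 0 → 2 ≤ G.toMultigraph.valence v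

def Stable : Prop := ∀ v : G.V,
  (G.weight v = 0 → 3 ≤ G.toMultigraph.valence v) ∧
  (G.weight v = 1 → 1 ≤ G.toMultigraph.valence v)

/-- Induced weighted subgraph. -/
def induce (W : Set G.V) : WGraph :=
  { G.toMultigraph.induce W with weight := fun v => G.weight v.1 }

/-- The genus of the induced subgraph on `W`:
`|E(W)| - |W| + c(W) + Σ_{v ∈ W} g_v`. -/
noncomputable def genusOf (W : Set G.V) : ℤ :=
  (Nat.card (G.toMultigraph.induce W).E : ℤ) - Nat.card W
    + Nat.card (Quot (G.toMultigraph.induce W).Reach)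
    + ∑ᶠ v ∈ W, (G.weight v : ℤ)

end WGraph


namespace Multigraph

variable {G : Multigraph}

lemma Adj.symm' {S : Set G.E} {u v : G.V} (h : G.Adj S u v) : G.Adj S v u := by
  obtain ⟨e, he, h | h⟩ := h
  · exact ⟨e, he, Or.inr h⟩
  · exact ⟨e, he, Or.inl h⟩

lemma ReachOn.symm' {S : Set G.E} {u v : G.V} (h : G.ReachOn S u v) : G.ReachOn S v u := by
  induction h with
  | refl => exact Relation.ReflTransGen.refl
  | tail _ hadj ih =>
      exact Relation.ReflTransGen.trans (Relation.ReflTransGen.single hadj.symm') ih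

lemma reachOn_equivalence (G : Multigraph) (S : Set G.E) : Equivalence (G.ReachOn S) :=
  ⟨fun _ => Relation.ReflTransGen.refl, ReachOn.symm', fun h h' => Relation.ReflTransGen.trans h h'⟩

lemma quot_mk_eq_iff (G : Multigraph) (S : Set G.E) {u v : G.V} :
    Quot.mk (G.ReachOn S) u = Quot.mk (G.ReachOn S) v ↔ G.ReachOn S u v := by
  rw [Quot.eq]
  exact Equivalence.eqvGen_iff (reachOn_equivalence G S)

lemma ReachOn.mono' {S T : Set G.E} (hST : S ⊆ T) {u v : G.V} (h : G.ReachOn S u v) :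
    G.ReachOn T u v := by
  induction h with
  | refl => exact Relation.ReflTransGen.refl
  | tail _ hadj ih =>
      obtain ⟨e, he, h'⟩ := hadj
      exact ih.tail ⟨e, hST he, h'⟩

lemma ReachOn.invariant {S : Set G.E} (P : G.V → Prop)
    (hP : ∀ e ∈ S, (P (G.src e) ↔ P (G.tgt e))) {u v : G.V}
    (h : G.ReachOn S u v) (hu : P u) : P v := by
  induction h with
  | refl => exact hu
  | tail _ hadj ih =>
      obtain ⟨e, he, ⟨h1, h2⟩ | ⟨h1, h2⟩⟩ := hadj
      · exact h2 ▸ ((hP e he).mp (h1.symm ▸ ih))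
      · exact h1 ▸ ((hP e he).mpr (h2.symm ▸ ih))

lemma induce_reachOn {W : Set G.V} {T : Set (G.induce W).E} {S : Set G.E}
    (hTS : ∀ f ∈ T, f.1 ∈ S) {u v : (G.induce W).V}
    (h : (G.induce W).ReachOn T u v) : G.ReachOn S u.1 v.1 := by
  induction h with
  | refl => exact Relation.ReflTransGen.refl
  | tail _ hadj ih =>
      obtain ⟨f, hf, ⟨h1, h2⟩ | ⟨h1, h2⟩⟩ := hadj
      · exact ih.tail ⟨f.1, hTS f hf,
          Or.inl ⟨congrArg Subtype.val h1, congrArg Subtype.val h2⟩⟩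
      · exact ih.tail ⟨f.1, hTS f hf,
          Or.inr ⟨congrArg Subtype.val h1, congrArg Subtype.val h2⟩⟩

lemma not_isBridge_of_induce {W : Set G.V} {f : (G.induce W).E}
    (hf : ¬ (G.induce W).IsBridge f) : ¬ G.IsBridge f.1 := by
  intro hB
  apply hB
  have h := not_not.mp hf
  exact induce_reachOn (S := {e | e ≠ f.1}) (fun g (hg : g ≠ f) => fun (he : g.1 = f.1) => hg (Subtype.ext he)) h

end Multigraph
namespace Multigraph

variable (G : Multigraph) (W : Set G.V)

/-- The vertex set (in `G`) of a 2-edge-connected component `q` of the induced subgraph. -/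
def Sset (q : (G.induce W).Br.V) : Set G.V :=
  {v | ∃ h : v ∈ W,
    Quot.mk ((G.induce W).ReachOn {e | ¬ (G.induce W).IsBridge e}) ⟨v, h⟩ = q}

/-- Boundary edges of `W` whose `W`-endpoint lies in the component `q`. -/
def CsetQ (q : (G.induce W).Br.V) : Set G.E :=
  {e | (∃ h : G.src e ∈ W, G.tgt e ∉ W ∧
          Quot.mk ((G.induce W).ReachOn {e | ¬ (G.induce W).IsBridge e}) ⟨G.src e, h⟩ = q) ∨
       (∃ h : G.tgt e ∈ W, G.src e ∉ W ∧
          Quot.mk ((G.induce W).ReachOn {e | ¬ (G.induce W).IsBridge e}) ⟨G.tgt e, h⟩ = q)}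

/-- Bridges of the induced subgraph incident to the component `q`. -/
def Dset (q : (G.induce W).Br.V) : Set (G.induce W).Br.E :=
  {b | (G.induce W).Br.src b = q ∨ (G.induce W).Br.tgt b = q}

/-- `e` has exactly one endpoint in the component `q`. -/
def Crosses (q : (G.induce W).Br.V) (e : G.E) : Prop :=
  (G.src e ∈ G.Sset W q ∧ G.tgt e ∉ G.Sset W q) ∨
  (G.tgt e ∈ G.Sset W q ∧ G.src e ∉ G.Sset W q)

variable {G W}

lemma Sset_subset {q : (G.induce W).Br.V} : G.Sset W q ⊆ W := fun _ hv => hv.choose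

lemma inside_nonbridgeH {q : (G.induce W).Br.V} (f : (G.induce W).E)
    (hs : G.src f.1 ∈ G.Sset W q) (ht : G.tgt f.1 ∈ G.Sset W q) :
    ¬ (G.induce W).IsBridge f := by
  intro hBf
  obtain ⟨hsW, hsq⟩ := hs
  obtain ⟨htW, htq⟩ := ht
  have hr : (G.induce W).ReachOn {e | ¬ (G.induce W).IsBridge e}
      ⟨G.src f.1, hsW⟩ ⟨G.tgt f.1, htW⟩ :=
    (quot_mk_eq_iff _ _).mp (hsq.trans htq.symm)
  have hr2 : (G.induce W).ReachOn {g | g ≠ f} ⟨G.src f.1, hsW⟩ ⟨G.tgt f.1, htW⟩ :=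
    hr.mono' (by intro g hg hgf; exact hg (hgf.symm ▸ hBf))
  exact hBf hr2

lemma inside_nonbridge {q : (G.induce W).Br.V} {e : G.E}
    (hs : G.src e ∈ G.Sset W q) (ht : G.tgt e ∈ G.Sset W q) : ¬ G.IsBridge e :=
  not_isBridge_of_induce
    (inside_nonbridgeH (⟨e, Sset_subset hs, Sset_subset ht⟩ : (G.induce W).E) hs ht)

lemma crosses_mem {q : (G.induce W).Br.V} {e : G.E} (hc : G.Crosses W q e) :
    e ∈ G.CsetQ W q ∨ ∃ b ∈ G.Dset W q, b.1.1 = e := by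
  rcases hc with ⟨hs, ht⟩ | ⟨ht, hs⟩
  · obtain ⟨hsW, hsq⟩ := hs
    by_cases htW : G.tgt e ∈ W
    · right
      have hBf : (G.induce W).IsBridge (⟨e, hsW, htW⟩ : (G.induce W).E) := by
        by_contra hnb
        refine ht ⟨htW, ?_⟩
        have : Quot.mk ((G.induce W).ReachOn {e | ¬ (G.induce W).IsBridge e})
            (⟨G.tgt e, htW⟩ : (G.induce W).V) = Quot.mk _ (⟨G.src e, hsW⟩ : (G.induce W).V) :=
          Quot.sound (Relation.ReflTransGen.single
            ⟨⟨e, hsW, htW⟩, hnb, Or.inr ⟨rfl, rfl⟩⟩)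
        exact this.trans hsq
      exact ⟨⟨⟨e, hsW, htW⟩, hBf⟩, Or.inl hsq, rfl⟩
    · exact Or.inl (Or.inl ⟨hsW, htW, hsq⟩)
  · obtain ⟨htW, htq⟩ := ht
    by_cases hsW : G.src e ∈ W
    · right
      have hBf : (G.induce W).IsBridge (⟨e, hsW, htW⟩ : (G.induce W).E) := by
        by_contra hnb
        refine hs ⟨hsW, ?_⟩
        have : Quot.mk ((G.induce W).ReachOn {e | ¬ (G.induce W).IsBridge e})
            (⟨G.src e, hsW⟩ : (G.induce W).V) = Quot.mk _ (⟨G.tgt e, htW⟩ : (G.induce W).V) :=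
          Quot.sound (Relation.ReflTransGen.single
            ⟨⟨e, hsW, htW⟩, hnb, Or.inl ⟨rfl, rfl⟩⟩)
        exact this.trans htq
      exact ⟨⟨⟨e, hsW, htW⟩, hBf⟩, Or.inr htq, rfl⟩
    · exact Or.inl (Or.inr ⟨htW, hsW, htq⟩)

lemma mem_Dset_crosses {q : (G.induce W).Br.V} {b : (G.induce W).Br.E}
    (hb : b ∈ G.Dset W q) : G.Crosses W q b.1.1 := by
  rcases hb with hb | hb
  · have hs : G.src b.1.1 ∈ G.Sset W q := ⟨b.1.2.1, hb⟩
    have ht : G.tgt b.1.1 ∉ G.Sset W q := fun ht => inside_nonbridgeH b.1 hs ht b.2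
    exact Or.inl ⟨hs, ht⟩
  · have ht : G.tgt b.1.1 ∈ G.Sset W q := ⟨b.1.2.2, hb⟩
    have hs : G.src b.1.1 ∉ G.Sset W q := fun hs => inside_nonbridgeH b.1 hs ht b.2
    exact Or.inr ⟨ht, hs⟩

lemma mem_CsetQ_crosses {q : (G.induce W).Br.V} {e : G.E}
    (he : e ∈ G.CsetQ W q) : G.Crosses W q e := by
  rcases he with ⟨hsW, htW, hsq⟩ | ⟨htW, hsW, htq⟩
  · exact Or.inl ⟨⟨hsW, hsq⟩, fun ht => htW (Sset_subset ht)⟩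
  · exact Or.inr ⟨⟨htW, htq⟩, fun hs => hsW (Sset_subset hs)⟩

lemma key0 (hG : G.Connected) (hW : W ≠ Set.univ) (q : (G.induce W).Br.V)
    (hD : G.Dset W q = ∅) (hC : G.CsetQ W q = ∅) : False := by
  obtain ⟨r, hr⟩ := Quot.exists_rep q
  have hrS : r.1 ∈ G.Sset W q := ⟨r.2, hr⟩
  obtain ⟨v, hv⟩ := (Set.ne_univ_iff_exists_notMem W).mp hW
  have hnc : ∀ e : G.E, ¬ G.Crosses W q e := by
    intro e hc
    rcases crosses_mem hc with hmem | ⟨b, hb, _⟩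
    · rw [hC] at hmem; exact hmem
    · rw [hD] at hb; exact hb
  have hinv : ∀ e ∈ (Set.univ : Set G.E),
      (G.src e ∈ G.Sset W q ↔ G.tgt e ∈ G.Sset W q) := by
    intro e _
    constructor
    · intro hs; by_contra ht; exact hnc e (Or.inl ⟨hs, ht⟩)
    · intro ht; by_contra hs; exact hnc e (Or.inr ⟨ht, hs⟩)
  have hvS : v ∈ G.Sset W q :=
    ReachOn.invariant (fun u => u ∈ G.Sset W q) hinv (hG.2 r.1 v) hrS
  exact hv (Sset_subset hvS)

lemma key1 (q : (G.induce W).Br.V)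
    (h1 : (G.Dset W q).ncard + (G.CsetQ W q).ncard = 1) :
    ∃ p : G.Br.V,
      (∀ v : G.V, Quot.mk (G.ReachOn {e | ¬ G.IsBridge e}) v = p ↔ v ∈ G.Sset W q) ∧
      G.Br.degAt p = 1 := by
  have hex : ∃ e₀ : G.E, G.Crosses W q e₀ ∧ ∀ e, G.Crosses W q e → e = e₀ := by
    rcases Nat.add_eq_one_iff.mp h1 with ⟨hD, hC⟩ | ⟨hD, hC⟩
    · obtain ⟨e', he'⟩ := Set.ncard_eq_one.mp hC
      have hD' : G.Dset W q = ∅ := (Set.ncard_eq_zero (Set.toFinite _)).mp hD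
      refine ⟨e', mem_CsetQ_crosses (he' ▸ rfl), ?_⟩
      intro e he
      rcases crosses_mem he with hmem | ⟨b, hb, hbe⟩
      · rw [he'] at hmem; exact hmem
      · rw [hD'] at hb; exact absurd hb (Set.notMem_empty b)
    · obtain ⟨b₀, hb₀⟩ := Set.ncard_eq_one.mp hD
      have hC' : G.CsetQ W q = ∅ := (Set.ncard_eq_zero (Set.toFinite _)).mp hC
      refine ⟨b₀.1.1, mem_Dset_crosses (hb₀ ▸ rfl), ?_⟩
      intro e he
      rcases crosses_mem he with hmem | ⟨b, hb, hbe⟩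
      · rw [hC'] at hmem; exact absurd hmem (Set.notMem_empty e)
      · rw [hb₀] at hb
        rw [← hbe, hb]
  obtain ⟨e₀, he₀, huniq⟩ := hex
  have hSprop : ∀ e : G.E, e ≠ e₀ → (G.src e ∈ G.Sset W q ↔ G.tgt e ∈ G.Sset W q) := by
    intro e hee
    constructor
    · intro hs; by_contra ht; exact hee (huniq e (Or.inl ⟨hs, ht⟩))
    · intro ht; by_contra hs; exact hee (huniq e (Or.inr ⟨ht, hs⟩))
  have hbr : G.IsBridge e₀ := by
    intro hre
    rcases he₀ with ⟨hs, ht⟩ | ⟨ht, hs⟩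
    · exact ht (ReachOn.invariant (fun u => u ∈ G.Sset W q) hSprop hre hs)
    · exact hs (ReachOn.invariant (fun u => u ∈ G.Sset W q) hSprop hre.symm' ht)
  obtain ⟨r, hr⟩ := Quot.exists_rep q
  have hrS : r.1 ∈ G.Sset W q := ⟨r.2, hr⟩
  have hSp : ∀ v : G.V,
      Quot.mk (G.ReachOn {e | ¬ G.IsBridge e}) v = Quot.mk (G.ReachOn {e | ¬ G.IsBridge e}) r.1
        ↔ v ∈ G.Sset W q := by
    intro v
    constructor
    · intro hv
      have hrv : G.ReachOn {e | ¬ G.IsBridge e} r.1 v :=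
        ((quot_mk_eq_iff _ _).mp hv).symm'
      refine ReachOn.invariant (fun u => u ∈ G.Sset W q) ?_ hrv hrS
      intro e he
      by_cases hee : e = e₀
      · exact absurd (by rw [hee]; exact hbr) he
      · exact hSprop e hee
    · rintro ⟨hvW, hvq⟩
      have hreach : (G.induce W).ReachOn {e | ¬ (G.induce W).IsBridge e} ⟨v, hvW⟩ r :=
        (quot_mk_eq_iff _ _).mp (hvq.trans hr.symm)
      exact Quot.sound (induce_reachOn (fun f hf => not_isBridge_of_induce hf) hreach)
  refine ⟨Quot.mk _ r.1, hSp, ?_⟩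
  have hset : {b : G.Br.E | G.Br.src b = Quot.mk (G.ReachOn {e | ¬ G.IsBridge e}) r.1 ∨
      G.Br.tgt b = Quot.mk (G.ReachOn {e | ¬ G.IsBridge e}) r.1}
      = {(⟨e₀, hbr⟩ : G.Br.E)} := by
    ext b
    simp only [Set.mem_setOf_eq, Set.mem_singleton_iff]
    constructor
    · rintro (hb | hb)
      · have hs : G.src b.1 ∈ G.Sset W q := (hSp _).mp hb
        have ht : G.tgt b.1 ∉ G.Sset W q := fun ht => inside_nonbridge hs ht b.2
        exact Subtype.ext (huniq _ (Or.inl ⟨hs, ht⟩))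
      · have ht : G.tgt b.1 ∈ G.Sset W q := (hSp _).mp hb
        have hs : G.src b.1 ∉ G.Sset W q := fun hs => inside_nonbridge hs ht b.2
        exact Subtype.ext (huniq _ (Or.inr ⟨ht, hs⟩))
    · rintro rfl
      rcases he₀ with ⟨hs, _⟩ | ⟨ht, _⟩
      · exact Or.inl ((hSp _).mpr hs)
      · exact Or.inr ((hSp _).mpr ht)
  show {b : G.Br.E | G.Br.src b = Quot.mk (G.ReachOn {e | ¬ G.IsBridge e}) r.1 ∨
      G.Br.tgt b = Quot.mk (G.ReachOn {e | ¬ G.IsBridge e}) r.1}.ncard = 1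
  rw [hset]
  exact Set.ncard_singleton _

end Multigraph
/-- Let `G` be a connected multigraph and `H` a proper induced
subgraph of `G` (given by a proper vertex set `W`). Let `k` be the number of
edges of `G` adjacent to `H` but not contained in `H`. Then
`#l(H^Br) ≤ #l(G^Br) + k`. -/
theorem leaves_of_induced_le_leaves_add_boundary
    (G : Multigraph) (hG : G.Connected) (W : Set G.V) (hW : W ≠ Set.univ) :
    ((G.induce W).Br.numLeaves : ℤ) ≤ G.Br.numLeaves +
      ({e : G.E | (G.src e ∈ W ∨ G.tgt e ∈ W) ∧ ¬(G.src e ∈ W ∧ G.tgt e ∈ W)}.ncard : ℤ) := by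
  classical
  rcases isEmpty_or_nonempty (G.induce W).Br.V with hemp | hne
  · have h0 : (G.induce W).Br.numLeaves = 0 := by
      unfold Multigraph.numLeaves
      rw [Set.eq_empty_of_isEmpty {v : (G.induce W).Br.V | (G.induce W).Br.degAt v = 0},
        Set.eq_empty_of_isEmpty {v : (G.induce W).Br.V | (G.induce W).Br.degAt v = 1},
        Set.ncard_empty]
    rw [h0]
    push_cast
    positivity
  · obtain ⟨q₀⟩ := hne
    haveI : Fintype (G.induce W).Br.V := Fintype.ofFinite _
    haveI : Fintype G.Br.V := Fintype.ofFinite _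
    haveI : Fintype G.E := Fintype.ofFinite _
    haveI : Fintype (G.induce W).Br.E := Fintype.ofFinite _
    haveI : Fintype G.Br.E := Fintype.ofFinite _
    set d : (G.induce W).Br.V → ℕ := fun q => (G.induce W).Br.degAt q with hd
    set c : (G.induce W).Br.V → ℕ := fun q => (G.CsetQ W q).ncard with hc
    -- Step 1 : numLeaves as a sum
    have hsum_card1 : ∀ (P : (G.induce W).Br.V → Prop),
        {q | P q}.ncard = ∑ q : (G.induce W).Br.V, if P q then 1 else 0 := by
      intro P
      rw [Set.ncard_eq_toFinset_card', Set.toFinset_setOf, Finset.sum_boole, Nat.cast_id]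
    have hnl : (G.induce W).Br.numLeaves
        = ∑ q : (G.induce W).Br.V,
            ((if d q = 0 then 2 else 0) + (if d q = 1 then 1 else 0)) := by
      show 2 * {q | d q = 0}.ncard + {q | d q = 1}.ncard = _
      rw [Finset.sum_add_distrib, hsum_card1 (fun q => d q = 0), hsum_card1 (fun q => d q = 1),
        Finset.mul_sum]
      congr 1
      · exact Finset.sum_congr rfl (fun q _ => by split_ifs <;> rfl)
      · exact Finset.sum_congr rfl (fun q _ => by split_ifs <;> rfl)
    -- Step 2 : pointwise bound
    have hdq : ∀ q, d q = (G.Dset W q).ncard := fun _ => rfl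
    have pt : ∀ q, (if d q = 0 then 2 else 0) + (if d q = 1 then 1 else 0)
        ≤ c q + (if d q + c q = 1 then 1 else 0) := by
      intro q
      have hkey : ¬ (d q = 0 ∧ c q = 0) := by
        rintro ⟨h0, hc0⟩
        exact Multigraph.key0 hG hW q
          ((Set.ncard_eq_zero (Set.toFinite _)).mp ((hdq q) ▸ h0))
          ((Set.ncard_eq_zero (Set.toFinite _)).mp hc0)
      split_ifs <;> omega
    -- Step 3 : the sum of `c` is the number of boundary edges
    set epc : G.E → (G.induce W).Br.V := fun e =>
      if h : G.src e ∈ W then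
        Quot.mk ((G.induce W).ReachOn {e | ¬ (G.induce W).IsBridge e}) ⟨G.src e, h⟩
      else if h' : G.tgt e ∈ W then
        Quot.mk ((G.induce W).ReachOn {e | ¬ (G.induce W).IsBridge e}) ⟨G.tgt e, h'⟩
      else q₀ with hepc
    have hmemC : ∀ (q : (G.induce W).Br.V) (e : G.E), e ∈ G.CsetQ W q ↔
        (((G.src e ∈ W ∨ G.tgt e ∈ W) ∧ ¬(G.src e ∈ W ∧ G.tgt e ∈ W)) ∧ epc e = q) := by
      intro q e
      constructor
      · rintro (⟨h, htW, hq⟩ | ⟨h, hsW, hq⟩)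
        · refine ⟨⟨Or.inl h, fun hb => htW hb.2⟩, ?_⟩
          rw [hepc]
          simp only
          exact (dif_pos h).trans hq
        · refine ⟨⟨Or.inr h, fun hb => hsW hb.1⟩, ?_⟩
          rw [hepc]
          simp only
          exact (dif_neg hsW).trans ((dif_pos h).trans hq)
      · rintro ⟨⟨hor, hnb⟩, hq⟩
        rw [hepc] at hq
        simp only at hq
        by_cases h : G.src e ∈ W
        · have htW : G.tgt e ∉ W := fun ht => hnb ⟨h, ht⟩
          exact Or.inl ⟨h, htW, (dif_pos h).symm.trans hq⟩
        · have htW : G.tgt e ∈ W := hor.resolve_left h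
          exact Or.inr ⟨htW, h, (dif_pos htW).symm.trans ((dif_neg h).symm.trans hq)⟩
    have hcsum :
        {e : G.E | (G.src e ∈ W ∨ G.tgt e ∈ W) ∧ ¬(G.src e ∈ W ∧ G.tgt e ∈ W)}.ncard
          = ∑ q : (G.induce W).Br.V, c q := by
      rw [Set.ncard_eq_toFinset_card', Set.toFinset_setOf]
      rw [Finset.card_eq_sum_card_fiberwise (f := epc) (t := Finset.univ)
        (fun x _ => Finset.mem_univ _)]
      refine Finset.sum_congr rfl (fun q _ => ?_)
      rw [Finset.filter_filter, hc]
      simp only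
      rw [Set.ncard_eq_toFinset_card']
      congr 1
      ext e
      simp only [Set.mem_toFinset, Finset.mem_filter, Finset.mem_univ, true_and]
      exact (hmemC q e).symm
    -- Step 4 : the `A`-terms inject into degree-one vertices of `G.Br`
    have houtS : ∀ q : (G.induce W).Br.V, (Quot.out q).1 ∈ G.Sset W q :=
      fun q => ⟨(Quot.out q).2, Quot.out_eq q⟩
    have hA : (Finset.univ.filter (fun q : (G.induce W).Br.V => d q + c q = 1)).card
        ≤ (Finset.univ.filter (fun p : G.Br.V => G.Br.degAt p = 1)).card := by
      refine Finset.card_le_card_of_injOn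
        (fun q => Quot.mk (G.ReachOn {e | ¬ G.IsBridge e}) (Quot.out q).1) ?_ ?_
      · intro q hq
        rw [Finset.mem_coe, Finset.mem_filter] at hq
        refine Finset.mem_coe.mpr (Finset.mem_filter.mpr ⟨Finset.mem_univ _, ?_⟩)
        obtain ⟨p, hpre, hdeg⟩ := Multigraph.key1 q ((hdq q) ▸ hq.2)
        have hΦ : Quot.mk (G.ReachOn {e | ¬ G.IsBridge e}) (Quot.out q).1 = p :=
          (hpre _).mpr (houtS q)
        show G.Br.degAt (Quot.mk (G.ReachOn {e | ¬ G.IsBridge e}) (Quot.out q).1) = 1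
        rw [hΦ]
        exact hdeg
      · intro q hq q' hq' h
        rw [Finset.coe_filter, Set.mem_setOf_eq] at hq hq'
        obtain ⟨p, hpre, -⟩ := Multigraph.key1 q ((hdq q) ▸ hq.2)
        obtain ⟨p', hpre', -⟩ := Multigraph.key1 q' ((hdq q') ▸ hq'.2)
        have hΦ : Quot.mk (G.ReachOn {e | ¬ G.IsBridge e}) (Quot.out q).1 = p :=
          (hpre _).mpr (houtS q)
        have hΦ' : Quot.mk (G.ReachOn {e | ¬ G.IsBridge e}) (Quot.out q').1 = p' :=
          (hpre' _).mpr (houtS q')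
        have hpp : p = p' := hΦ.symm.trans (h.trans hΦ')
        have : (Quot.out q').1 ∈ G.Sset W q := by
          rw [← hpre]
          rw [hpp]
          exact hΦ'
        obtain ⟨hmw, hmq⟩ := this
        exact ((Quot.out_eq q').symm.trans hmq).symm
    -- Step 5 : assemble
    have hf1 : (Finset.univ.filter (fun p : G.Br.V => G.Br.degAt p = 1)).card
        ≤ G.Br.numLeaves := by
      show _ ≤ 2 * {p : G.Br.V | G.Br.degAt p = 0}.ncard + {p : G.Br.V | G.Br.degAt p = 1}.ncard
      rw [Set.ncard_eq_toFinset_card' {p : G.Br.V | G.Br.degAt p = 1}, Set.toFinset_setOf]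
      exact Nat.le_add_left _ _
    have main : (G.induce W).Br.numLeaves ≤ G.Br.numLeaves +
        {e : G.E | (G.src e ∈ W ∨ G.tgt e ∈ W) ∧ ¬(G.src e ∈ W ∧ G.tgt e ∈ W)}.ncard := by
      rw [hnl, hcsum]
      calc ∑ q : (G.induce W).Br.V,
            ((if d q = 0 then 2 else 0) + (if d q = 1 then 1 else 0))
          ≤ ∑ q : (G.induce W).Br.V, (c q + (if d q + c q = 1 then 1 else 0)) :=
            Finset.sum_le_sum (fun q _ => pt q)
        _ = (∑ q : (G.induce W).Br.V, c q)
              + ∑ q : (G.induce W).Br.V, (if d q + c q = 1 then 1 else 0) :=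
            Finset.sum_add_distrib
        _ ≤ (∑ q : (G.induce W).Br.V, c q) + G.Br.numLeaves := by
            gcongr
            rw [Finset.sum_boole, Nat.cast_id]
            exact le_trans hA hf1
        _ = G.Br.numLeaves + ∑ q : (G.induce W).Br.V, c q := add_comm _ _
    exact_mod_cast main
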